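/- Let P be a k-plex containing a designated vertex v_i with |P| ≥ q. Suppose u_1 ∈ P is non-adjacent to v_i (u_1 ≠ v_i) and u_2 ∈ P is adjacent to v_i, with (u_1, u_2) ∈ E. Let C = (N_G(v_i) ∩ P) \ {u_2}. Then |N_C(u_1) ∩ N_C(u_2)| ≥ q - 2k - 2·max{k-2, 0}. -/

import Mathlib

open Finset

variable {V : Type*} [Fintype V] [DecidableEq V]

/-- A set `P` of vertices is a `k`-plex in `G` if every `u ∈ P` has degree at least
`|P| - k` in the induced subgraph `G[P]`, i.e. `|P| ≤ d_P(u) + k`. -/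
def SimpleGraph.IsKPlex (G : SimpleGraph V) [DecidableRel G.Adj] (k : ℕ) (P : Finset V) : Prop :=
  ∀ u ∈ P, P.card ≤ (P.filter (fun x => G.Adj u x)).card + k

theorem pair_prune_mixed_adjacent (G : SimpleGraph V) [DecidableRel G.Adj]
    (k q : ℕ) (hk : 1 ≤ k) (P : Finset V) (v_i : V) (hP : G.IsKPlex k P)
    (hvi : v_i ∈ P) (hq : q ≤ P.card) (u1 u2 : V) (h1 : u1 ∈ P) (h2 : u2 ∈ P)
    (hn1 : u1 ≠ v_i) (ha1 : ¬ G.Adj u1 v_i) (ha2 : G.Adj u2 v_i)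
    (h12 : G.Adj u1 u2) :
    (q : ℤ) - 2 * (k : ℤ) - 2 * max ((k : ℤ) - 2) 0 ≤
      ((((G.neighborFinset v_i ∩ P).erase u2).filter
          (fun x => G.Adj u1 x ∧ G.Adj u2 x)).card : ℤ) := by
  classical
  set C : Finset V := (G.neighborFinset v_i ∩ P).erase u2 with hCdef
  have hCsubP : C ⊆ P := by
    intro x hx
    rw [hCdef, mem_erase, mem_inter] at hx
    exact hx.2.2
  -- non-neighbor bound from the k-plex property
  have nonnb : ∀ u ∈ P, (P.filter (fun x => ¬ G.Adj u x)).card ≤ k := by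
    intro u hu
    have h := hP u hu
    have h2 := Finset.card_filter_add_card_filter_not
      (s := P) (p := fun x => G.Adj u x)
    omega
  -- u1 is not in C, u2 is not in C, v_i is not in C
  have hu1C : u1 ∉ C := by
    intro h
    rw [hCdef, mem_erase, mem_inter, SimpleGraph.mem_neighborFinset] at h
    exact ha1 h.2.1.symm
  have hu2C : u2 ∉ C := by
    rw [hCdef]; exact notMem_erase _ _
  have hviC : v_i ∉ C := by
    intro h
    rw [hCdef, mem_erase, mem_inter, SimpleGraph.mem_neighborFinset] at h
    exact G.irrefl h.2.1
  -- |C| + 1 = |N(v_i) ∩ P| and |N(v_i) ∩ P| ≥ |P| - k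
  have hu2mem : u2 ∈ G.neighborFinset v_i ∩ P := by
    rw [mem_inter, SimpleGraph.mem_neighborFinset]
    exact ⟨ha2.symm, h2⟩
  have hCcard : C.card + 1 = (G.neighborFinset v_i ∩ P).card := by
    rw [hCdef, card_erase_of_mem hu2mem]
    have : 1 ≤ (G.neighborFinset v_i ∩ P).card := card_pos.mpr ⟨u2, hu2mem⟩
    omega
  have hNvi : (G.neighborFinset v_i ∩ P) = P.filter (fun x => G.Adj v_i x) := by
    ext x
    simp [mem_inter, SimpleGraph.mem_neighborFinset, mem_filter, and_comm]
  have hClb : P.card ≤ C.card + 1 + k := by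
    rw [hCcard, hNvi]
    exact hP v_i hvi
  -- non-neighbors of u1 within C: at most k - 2
  set nn1 : Finset V := C.filter (fun x => ¬ G.Adj u1 x) with hnn1
  set nn2 : Finset V := C.filter (fun x => ¬ G.Adj u2 x) with hnn2
  have hnn1b : nn1.card + 2 ≤ k := by
    have hsub : insert u1 (insert v_i nn1) ⊆ P.filter (fun x => ¬ G.Adj u1 x) := by
      intro x hx
      rcases mem_insert.mp hx with rfl | hx
      · exact mem_filter.mpr ⟨h1, G.irrefl⟩
      rcases mem_insert.mp hx with rfl | hx
      · exact mem_filter.mpr ⟨hvi, ha1⟩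
      · rw [hnn1, mem_filter] at hx
        exact mem_filter.mpr ⟨hCsubP hx.1, hx.2⟩
    have hcard : (insert u1 (insert v_i nn1)).card = nn1.card + 2 := by
      rw [card_insert_of_notMem, card_insert_of_notMem]
      · intro h
        rw [hnn1, mem_filter] at h
        exact hviC h.1
      · intro h
        rcases mem_insert.mp h with h | h
        · exact hn1 h
        · rw [hnn1, mem_filter] at h
          exact hu1C h.1
    have := card_le_card hsub
    rw [hcard] at this
    exact this.trans (nonnb u1 h1)
  have hnn2b : nn2.card + 1 ≤ k := by
    have hsub : insert u2 nn2 ⊆ P.filter (fun x => ¬ G.Adj u2 x) := by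
      intro x hx
      rcases mem_insert.mp hx with rfl | hx
      · exact mem_filter.mpr ⟨h2, G.irrefl⟩
      · rw [hnn2, mem_filter] at hx
        exact mem_filter.mpr ⟨hCsubP hx.1, hx.2⟩
    have hcard : (insert u2 nn2).card = nn2.card + 1 := by
      rw [card_insert_of_notMem]
      intro h
      rw [hnn2, mem_filter] at h
      exact hu2C h.1
    have := card_le_card hsub
    rw [hcard] at this
    exact this.trans (nonnb u2 h2)
  -- intersection bound
  set A : Finset V := C.filter (fun x => G.Adj u1 x) with hA
  set B : Finset V := C.filter (fun x => G.Adj u2 x) with hB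
  have hAB : C.filter (fun x => G.Adj u1 x ∧ G.Adj u2 x) = A ∩ B := by
    rw [hA, hB, ← filter_and]
  have hA1 : A.card + nn1.card = C.card :=
    Finset.card_filter_add_card_filter_not (s := C) (p := fun x => G.Adj u1 x)
  have hB1 : B.card + nn2.card = C.card :=
    Finset.card_filter_add_card_filter_not (s := C) (p := fun x => G.Adj u2 x)
  have hunion : (A ∪ B).card ≤ C.card := by
    apply card_le_card
    intro x hx
    rcases mem_union.mp hx with hx | hx
    · exact (mem_filter.mp hx).1
    · exact (mem_filter.mp hx).1
  have hiu : (A ∪ B).card + (A ∩ B).card = A.card + B.card :=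
    Finset.card_union_add_card_inter A B
  -- k ≥ 2 forced
  have hk2 : 2 ≤ k := by omega
  have hmax : max ((k : ℤ) - 2) 0 = (k : ℤ) - 2 := by
    apply max_eq_left
    have : (2 : ℤ) ≤ (k : ℤ) := by exact_mod_cast hk2
    omega
  rw [hAB, hmax]
  have hfinal : q ≤ (A ∩ B).card + 3 * k := by omega
  have : (q : ℤ) ≤ ((A ∩ B).card : ℤ) + 3 * (k : ℤ) := by exact_mod_cast hfinal
  omega
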